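/- Let n ≥ 2, L ≥ 0, N ≥ 1, and let m₁, …, m_N ≥ 2. Let Γ = ℤ/m₁ ∗ ⋯ ∗ ℤ/m_N be the free product of cyclic groups with distinguished generators z₁, …, z_N, and let F be the free group on the n−1+L generators x₁, …, x_{n−1}, y₁, …, y_L. Then for every 1 ≤ k ≤ n−1 and every 1 ≤ ν ≤ N, the element (x_k·z_ν)^{m_ν}·(x_k⁻¹·z_ν⁻¹)^{m_ν} of the free product F ∗ Γ is not the identity. In particular, the normal closure of the set {(x_k·z_ν)^{m_ν}·(x_k⁻¹·z_ν⁻¹)^{m_ν} : 1 ≤ k ≤ n−1, 1 ≤ ν ≤ N} in F ∗ Γ is a nontrivial normal subgroup. -/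

import Mathlib

namespace Stmt5Aux

variable {M : ℕ}

def bperm (M : ℕ) : Equiv.Perm (Option (ZMod M)) := Equiv.optionCongr (Equiv.addRight 1)

def aperm (M : ℕ) : Equiv.Perm (Option (ZMod M)) := Equiv.swap (some (-1)) none

lemma bperm_apply (x : Option (ZMod M)) : bperm M x = Option.map (· + 1) x := by
  cases x <;> rfl

lemma bperm_pow (j : ℕ) (x : Option (ZMod M)) :
    (bperm M ^ j) x = Option.map (· + (j : ZMod M)) x := by
  induction j generalizing x with
  | zero => cases x <;> simp
  | succ j ih =>
    rw [pow_succ, Equiv.Perm.mul_apply, bperm_apply, ih]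
    cases x <;> simp <;> ring

lemma bperm_pow_self : (bperm M) ^ M = 1 := by
  ext x
  rw [bperm_pow]
  cases x <;> simp

lemma aperm_apply_some {c : ZMod M} (h : c ≠ -1) : aperm M (some c) = some c :=
  Equiv.swap_apply_of_ne_of_ne (by simpa using h) (by simp)

lemma aperm_inv : (aperm M)⁻¹ = aperm M := by
  simp [aperm]

end Stmt5Aux

namespace Stmt5Aux

lemma pow_pred {G : Type*} [Group G] (g : G) {n : ℕ} (h : 1 ≤ n) :
    g ^ n = g * g ^ (n - 1) := by
  conv_lhs => rw [show n = (n - 1) + 1 by omega]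
  rw [pow_succ']

lemma natCast_sub_one (hM : 2 ≤ M) : ((M - 1 : ℕ) : ZMod M) = -1 := by
  rw [Nat.cast_sub (by omega), ZMod.natCast_self, Nat.cast_one, zero_sub]

lemma cast_ne_neg_one (hM : 2 ≤ M) {j : ℕ} (hj : j < M - 1) : (j : ZMod M) ≠ -1 := by
  haveI : NeZero M := ⟨by omega⟩
  rw [← natCast_sub_one hM]
  intro h
  have := congrArg ZMod.val h
  rw [ZMod.val_natCast_of_lt (by omega), ZMod.val_natCast_of_lt (by omega)] at this
  omega

lemma ab_pow (hM : 2 ≤ M) : ∀ j : ℕ, j ≤ M - 2 →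
    ((aperm M * bperm M) ^ j) (some 0) = some (j : ZMod M) := by
  intro j
  induction j with
  | zero => simp
  | succ j ih =>
    intro hj
    rw [pow_succ', Equiv.Perm.mul_apply, ih (by omega), Equiv.Perm.mul_apply, bperm_apply]
    simp only [Option.map_some]
    rw [aperm_apply_some (by exact_mod_cast cast_ne_neg_one hM (by omega : j + 1 < M - 1))]
    push_cast
    rfl

lemma ab_pow_self (hM : 2 ≤ M) :
    ((aperm M * bperm M) ^ M) (some 0) = some (-1) := by
  have h1 : ((aperm M * bperm M) ^ (M - 1)) (some (0 : ZMod M)) = none := by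
    rw [pow_pred _ (by omega : 1 ≤ M - 1), Equiv.Perm.mul_apply,
      show M - 1 - 1 = M - 2 by omega, ab_pow hM (M - 2) le_rfl,
      Equiv.Perm.mul_apply, bperm_apply]
    simp only [Option.map_some]
    have : ((M - 2 : ℕ) : ZMod M) + 1 = -1 := by
      rw [Nat.cast_sub (by omega : 2 ≤ M), ZMod.natCast_self]
      push_cast
      ring
    rw [this, aperm]
    exact Equiv.swap_apply_left _ _
  rw [pow_pred _ (by omega : 1 ≤ M), Equiv.Perm.mul_apply, h1,
    Equiv.Perm.mul_apply, bperm_apply]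
  simp only [Option.map_none]
  rw [aperm]
  exact Equiv.swap_apply_right _ _

lemma ba_pow (hM : 2 ≤ M) : ∀ j : ℕ, j ≤ M - 1 →
    ((bperm M * aperm M) ^ j) (some 0) = some (j : ZMod M) := by
  intro j
  induction j with
  | zero => simp
  | succ j ih =>
    intro hj
    rw [pow_succ', Equiv.Perm.mul_apply, ih (by omega), Equiv.Perm.mul_apply,
      aperm_apply_some (cast_ne_neg_one hM (by omega)), bperm_apply]
    simp only [Option.map_some]
    push_cast
    rfl

lemma ba_pow_self (hM : 2 ≤ M) :
    ((bperm M * aperm M) ^ M) (some 0) = none := by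
  rw [pow_pred _ (by omega : 1 ≤ M), Equiv.Perm.mul_apply, ba_pow hM (M - 1) le_rfl,
    Equiv.Perm.mul_apply]
  rw [natCast_sub_one hM, aperm, Equiv.swap_apply_left, bperm_apply]
  rfl

lemma main_perm (hM : 2 ≤ M) :
    (aperm M * bperm M) ^ M * ((aperm M)⁻¹ * (bperm M)⁻¹) ^ M ≠ 1 := by
  intro h
  have h2 : (aperm M * bperm M) ^ M = (bperm M * aperm M) ^ M := by
    have := eq_inv_of_mul_eq_one_left h
    rw [← inv_pow, mul_inv_rev, inv_inv, inv_inv] at this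
    exact this
  have := congrArg (fun f => f (some (0 : ZMod M))) h2
  rw [ab_pow_self hM, ba_pow_self hM] at this
  exact Option.some_ne_none _ this

end Stmt5Aux

namespace Stmt5Aux

noncomputable def zhom (M : ℕ) : Multiplicative (ZMod M) →* Equiv.Perm (Option (ZMod M)) :=
  AddMonoidHom.toMultiplicativeLeft
    (ZMod.lift M ⟨AddMonoidHom.mk' (fun k => Additive.ofMul ((bperm M) ^ k))
        (fun x y => by simp [zpow_add]), by
      show Additive.ofMul ((bperm M) ^ (M : ℤ)) = 0
      rw [zpow_natCast, bperm_pow_self]; rfl⟩)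

lemma zhom_apply_one : zhom M (Multiplicative.ofAdd (1 : ZMod M)) = bperm M := by
  unfold zhom
  rw [AddMonoidHom.coe_toMultiplicativeLeft]
  simp only [Function.comp_apply, toAdd_ofAdd]
  rw [show (1 : ZMod M) = ((1 : ℤ) : ZMod M) by push_cast; rfl, ZMod.lift_coe]
  simp

end Stmt5Aux


/-- The free product `F_{n-1+L} ∗ Γ`, where `F_{n-1+L}` is the free group on the
generators `x₁, …, x_{n-1}, y₁, …, y_L` and `Γ = ℤ/m₁ ∗ ⋯ ∗ ℤ/m_N`. -/
abbrev OrbifoldFundGroup (n L N : ℕ) (m : Fin N → ℕ) : Type :=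
  Monoid.Coprod (FreeGroup (Fin (n - 1) ⊕ Fin L))
    (Monoid.CoprodI fun ν : Fin N => Multiplicative (ZMod (m ν)))

/-- The generator `x_k` of the free factor, `1 ≤ k ≤ n-1`. -/
def xGen (n L N : ℕ) (m : Fin N → ℕ) (k : Fin (n - 1)) : OrbifoldFundGroup n L N m :=
  Monoid.Coprod.inl (FreeGroup.of (Sum.inl k))

/-- The generator `y_λ` of the free factor, `1 ≤ λ ≤ L`. -/
def yGen (n L N : ℕ) (m : Fin N → ℕ) (l : Fin L) : OrbifoldFundGroup n L N m :=
  Monoid.Coprod.inl (FreeGroup.of (Sum.inr l))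

/-- The distinguished generator `z_ν` of the `ν`-th cyclic factor `ℤ/m_ν` of `Γ`. -/
def zGen (n L N : ℕ) (m : Fin N → ℕ) (ν : Fin N) : OrbifoldFundGroup n L N m :=
  Monoid.Coprod.inr (Monoid.CoprodI.of (Multiplicative.ofAdd (1 : ZMod (m ν))))

/-- For `n ≥ 2`, `N ≥ 1` and `m_ν ≥ 2`, each element
`(x_k·z_ν)^{m_ν}·(x_k⁻¹·z_ν⁻¹)^{m_ν}` of `F_{n-1+L} ∗ Γ` is not the identity;
in particular the normal closure of the set of all these elements is a
nontrivial normal subgroup. -/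
theorem stmt_5 (n L N : ℕ) (hn : 2 ≤ n) (hN : 1 ≤ N)
    (m : Fin N → ℕ) (hm : ∀ ν, 2 ≤ m ν) :
    (∀ (k : Fin (n - 1)) (ν : Fin N),
      (xGen n L N m k * zGen n L N m ν) ^ m ν *
        ((xGen n L N m k)⁻¹ * (zGen n L N m ν)⁻¹) ^ m ν ≠ 1) ∧
    Subgroup.normalClosure
        {g : OrbifoldFundGroup n L N m | ∃ (k : Fin (n - 1)) (ν : Fin N),
          g = (xGen n L N m k * zGen n L N m ν) ^ m ν *
            ((xGen n L N m k)⁻¹ * (zGen n L N m ν)⁻¹) ^ m ν} ≠ ⊥ := by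
  have key : ∀ (k : Fin (n - 1)) (ν : Fin N),
      (xGen n L N m k * zGen n L N m ν) ^ m ν *
        ((xGen n L N m k)⁻¹ * (zGen n L N m ν)⁻¹) ^ m ν ≠ 1 := by
    intro k ν
    have hM : 2 ≤ m ν := hm ν
    let G := Equiv.Perm (Option (ZMod (m ν)))
    let homF : FreeGroup (Fin (n - 1) ⊕ Fin L) →* G :=
      FreeGroup.lift (fun s => if s = Sum.inl k then Stmt5Aux.aperm (m ν) else 1)
    let ghoms : ∀ ν' : Fin N, Multiplicative (ZMod (m ν')) →* G :=
      Function.update (fun _ => 1) ν (Stmt5Aux.zhom (m ν))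
    let φ : OrbifoldFundGroup n L N m →* G :=
      Monoid.Coprod.lift homF (Monoid.CoprodI.lift ghoms)
    have hx : φ (xGen n L N m k) = Stmt5Aux.aperm (m ν) := by
      simp [φ, xGen, Monoid.Coprod.lift_apply_inl, homF]
    have hg : ghoms ν = Stmt5Aux.zhom (m ν) := Function.update_self ν _ _
    have hz : φ (zGen n L N m ν) = Stmt5Aux.bperm (m ν) := by
      show Monoid.Coprod.lift homF (Monoid.CoprodI.lift ghoms)
        (Monoid.Coprod.inr (Monoid.CoprodI.of _)) = _
      rw [Monoid.Coprod.lift_apply_inr, Monoid.CoprodI.lift_of, hg,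
        Stmt5Aux.zhom_apply_one]
    intro h
    have h2 := congrArg φ h
    simp only [map_mul, map_pow, map_one] at h2
    rw [map_inv φ (xGen n L N m k), map_inv φ (zGen n L N m ν), hx, hz] at h2
    exact Stmt5Aux.main_perm hM h2
  refine ⟨key, ?_⟩
  intro hbot
  have hk : 0 < n - 1 := by omega
  have hmem : (xGen n L N m ⟨0, hk⟩ * zGen n L N m ⟨0, hN⟩) ^ m ⟨0, hN⟩ *
      ((xGen n L N m ⟨0, hk⟩)⁻¹ * (zGen n L N m ⟨0, hN⟩)⁻¹) ^ m ⟨0, hN⟩ ∈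
      Subgroup.normalClosure
        {g : OrbifoldFundGroup n L N m | ∃ (k : Fin (n - 1)) (ν : Fin N),
          g = (xGen n L N m k * zGen n L N m ν) ^ m ν *
            ((xGen n L N m k)⁻¹ * (zGen n L N m ν)⁻¹) ^ m ν} :=
    Subgroup.subset_normalClosure ⟨⟨0, hk⟩, ⟨0, hN⟩, rfl⟩
  rw [hbot, Subgroup.mem_bot] at hmem
  exact key ⟨0, hk⟩ ⟨0, hN⟩ hmem
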